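/- arXiv:2112.10020 — 3 statements merged into one kernel-verified Lean document; each statement's English description precedes it below -/
import Mathlib

section
/- Let Π₀ and Π₁ be orthogonal projectors on a finite-dimensional Hilbert space. Then for every unit vector |ψ⟩, ⟨ψ|(Π₀ + Π₁)|ψ⟩ ≤ 1 + 3√(Tr(Π₀Π₁)). -/
open scoped BigOperators
open Matrix

noncomputable section

variable {E : Type*} [NormedAddCommGroup E] [InnerProductSpace ℂ E]

local notation "⟪" x ", " y "⟫" => @inner ℂ _ _ x y

lemma proj_contractive (T : E →ₗ[ℂ] E) (hs : T.IsSymmetric)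
    (hi : ∀ x, T (T x) = T x) (x : E) : ‖T x‖ ≤ ‖x‖ := by
  rcases eq_or_ne (T x) 0 with h | h
  · rw [h, norm_zero]; exact norm_nonneg x
  · have h1 : (‖T x‖ : ℝ) ^ 2 = Complex.re ⟪T x, T x⟫ := by
      have := inner_self_eq_norm_sq_to_K (𝕜 := ℂ) (T x)
      rw [this]; norm_cast
    have h2 : ⟪T x, T x⟫ = ⟪x, T x⟫ := by
      rw [hs x (T x), hi]
    have h3 : Complex.re ⟪x, T x⟫ ≤ ‖x‖ * ‖T x‖ := by
      calc Complex.re ⟪x, T x⟫ ≤ ‖⟪x, T x⟫‖ := Complex.re_le_norm _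
        _ ≤ ‖x‖ * ‖T x‖ := norm_inner_le_norm _ _
    have h4 : ‖T x‖ ^ 2 ≤ ‖x‖ * ‖T x‖ := by rw [h1, h2]; exact h3
    have hpos : 0 < ‖T x‖ := norm_pos_iff.mpr h
    nlinarith

lemma abstract_bound (T0 T1 : E →ₗ[ℂ] E)
    (hs0 : T0.IsSymmetric) (hi0 : ∀ x, T0 (T0 x) = T0 x)
    (hs1 : T1.IsSymmetric) (hi1 : ∀ x, T1 (T1 x) = T1 x)
    (φ : E) (hφ : ‖φ‖ = 1) (t : ℝ) (ht : ‖T1 (T0 φ)‖ ^ 2 ≤ t) :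
    Complex.re ⟪φ, T0 φ + T1 φ⟫ ≤ 1 + 3 * Real.sqrt t := by
  set α := T0 φ with hα
  set β := φ - α with hβ
  have hφαβ : φ = α + β := by simp [hβ]
  have hre0 : Complex.re ⟪φ, T0 φ⟫ = ‖α‖ ^ 2 := by
    have h2 : ⟪α, α⟫ = ⟪φ, T0 φ⟫ := by
      rw [hα, hs0 φ (T0 φ), hi0]
    rw [← h2, inner_self_eq_norm_sq_to_K]; norm_cast
  have hre1 : Complex.re ⟪φ, T1 φ⟫ = ‖T1 φ‖ ^ 2 := by
    have h2 : ⟪T1 φ, T1 φ⟫ = ⟪φ, T1 φ⟫ := by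
      rw [hs1 φ (T1 φ), hi1]
    rw [← h2, inner_self_eq_norm_sq_to_K]; norm_cast
  have horth : ⟪α, β⟫ = 0 := by
    have h1 : ⟪α, β⟫ = ⟪T0 α, β⟫ := by rw [hα, hi0]
    have h2 : ⟪T0 α, β⟫ = ⟪α, T0 β⟫ := hs0 α β
    have h3 : T0 β = 0 := by
      simp [hβ, map_sub, hα, hi0]
    rw [h1, h2, h3, inner_zero_right]
  have hpyth : ‖α‖ ^ 2 + ‖β‖ ^ 2 = 1 := by
    have := norm_add_sq (𝕜 := ℂ) α β
    rw [← hφαβ, hφ, horth] at this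
    simp at this
    linarith
  -- bound ‖T1 φ‖
  have hT1φ : ‖T1 φ‖ ≤ ‖T1 α‖ + ‖β‖ := by
    calc ‖T1 φ‖ = ‖T1 α + T1 β‖ := by rw [hφαβ, map_add]
      _ ≤ ‖T1 α‖ + ‖T1 β‖ := norm_add_le _ _
      _ ≤ ‖T1 α‖ + ‖β‖ := by
          have := proj_contractive T1 hs1 hi1 β
          linarith
  set a := ‖T1 α‖ with ha
  set b := ‖β‖ with hb
  set c := ‖α‖ with hc
  have ha2t : a ^ 2 ≤ t := ht
  have hac : a ≤ c := proj_contractive T1 hs1 hi1 α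
  have hc1 : c ≤ 1 := by nlinarith [norm_nonneg β, norm_nonneg α]
  have hb1 : b ≤ 1 := by nlinarith [norm_nonneg β, norm_nonneg α]
  have ha0 : 0 ≤ a := norm_nonneg _
  have hb0 : 0 ≤ b := norm_nonneg _
  have hat : a ≤ Real.sqrt t := by
    have : a = Real.sqrt (a ^ 2) := by rw [Real.sqrt_sq ha0]
    rw [this]; exact Real.sqrt_le_sqrt ha2t
  have ha1 : a ≤ 1 := le_trans hac hc1
  have hT1sq : ‖T1 φ‖ ^ 2 ≤ (a + b) ^ 2 := by
    have h0 : (0:ℝ) ≤ ‖T1 φ‖ := norm_nonneg _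
    nlinarith [hT1φ]
  have : Complex.re ⟪φ, T0 φ + T1 φ⟫ = c ^ 2 + ‖T1 φ‖ ^ 2 := by
    rw [inner_add_right, Complex.add_re, hre0, hre1]
  rw [this]
  have hst : a ≤ Real.sqrt t := hat
  nlinarith [hT1sq, hpyth, Real.sqrt_nonneg t]

lemma star_mul_self_re (z : ℂ) : (star z * z).re = ‖z‖ ^ 2 := by
  rw [Complex.star_def, mul_comm, Complex.mul_conj]
  simp [Complex.normSq_eq_norm_sq]; norm_cast

lemma frob_bound (D : ℕ) (B : Matrix (Fin D) (Fin D) ℂ) (ψ : Fin D → ℂ)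
    (hψ : ∑ i, ‖ψ i‖ ^ 2 = 1) :
    ∑ i, ‖B.mulVec ψ i‖ ^ 2 ≤ ((Bᴴ * B).trace).re := by
  have htr : ((Bᴴ * B).trace).re = ∑ j, ∑ i, ‖B i j‖ ^ 2 := by
    rw [Matrix.trace, Complex.re_sum]
    refine Finset.sum_congr rfl fun j _ => ?_
    simp only [Matrix.diag, Matrix.mul_apply, Matrix.conjTranspose_apply]
    rw [Complex.re_sum]
    exact Finset.sum_congr rfl fun i _ => star_mul_self_re _
  rw [htr, Finset.sum_comm]
  refine Finset.sum_le_sum fun i _ => ?_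
  have h1 : ‖B.mulVec ψ i‖ ≤ ∑ j, ‖B i j‖ * ‖ψ j‖ := by
    calc ‖B.mulVec ψ i‖ = ‖∑ j, B i j * ψ j‖ := by
          simp [Matrix.mulVec, dotProduct]
      _ ≤ ∑ j, ‖B i j * ψ j‖ := norm_sum_le _ _
      _ = ∑ j, ‖B i j‖ * ‖ψ j‖ := by simp [norm_mul]
  have h2 : (∑ j, ‖B i j‖ * ‖ψ j‖) ^ 2 ≤ (∑ j, ‖B i j‖ ^ 2) * (∑ j, ‖ψ j‖ ^ 2) :=
    Finset.sum_mul_sq_le_sq_mul_sq _ _ _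
  have h3 : ‖B.mulVec ψ i‖ ^ 2 ≤ (∑ j, ‖B i j‖ * ‖ψ j‖) ^ 2 := by
    apply pow_le_pow_left₀ (norm_nonneg _) h1
  rw [hψ, mul_one] at h2
  linarith

end

/-- For orthogonal projectors `Π₀`, `Π₁` and any unit vector `ψ`,
`⟨ψ|(Π₀ + Π₁)|ψ⟩ ≤ 1 + 3√(Tr(Π₀Π₁))`. -/
theorem sum_two_projectors_quadform_bound (D : ℕ)
    (Q0 Q1 : Matrix (Fin D) (Fin D) ℂ)
    (h0 : Q0 * Q0 = Q0) (h0h : Q0.IsHermitian)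
    (h1 : Q1 * Q1 = Q1) (h1h : Q1.IsHermitian)
    (ψ : Fin D → ℂ) (hψ : ∑ i, ‖ψ i‖ ^ 2 = 1) :
    (∑ i, star (ψ i) * (Q0 + Q1).mulVec ψ i).re
      ≤ 1 + 3 * Real.sqrt ((Q0 * Q1).trace.re) := by
  classical
  set φ : EuclideanSpace ℂ (Fin D) := (WithLp.equiv 2 (Fin D → ℂ)).symm ψ with hφdef
  set T0 := Matrix.toEuclideanLin Q0 with hT0
  set T1 := Matrix.toEuclideanLin Q1 with hT1
  have hφnorm : ‖φ‖ = 1 := by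
    rw [EuclideanSpace.norm_eq]
    have : ∀ i, ‖φ i‖ = ‖ψ i‖ := fun i => rfl
    simp only [this, hψ, Real.sqrt_one]
  have hs0 : T0.IsSymmetric := Matrix.isHermitian_iff_isSymmetric.mp h0h
  have hs1 : T1.IsSymmetric := Matrix.isHermitian_iff_isSymmetric.mp h1h
  have hi0 : ∀ x, T0 (T0 x) = T0 x := by
    intro x
    rw [hT0]
    simp only [Matrix.toEuclideanLin_apply, Equiv.apply_symm_apply,
      Matrix.mulVec_mulVec, h0]
  have hi1 : ∀ x, T1 (T1 x) = T1 x := by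
    intro x
    rw [hT1]
    simp only [Matrix.toEuclideanLin_apply, Equiv.apply_symm_apply,
      Matrix.mulVec_mulVec, h1]
  -- identify the LHS with the inner product
  have hlhs : (∑ i, star (ψ i) * (Q0 + Q1).mulVec ψ i)
      = (inner ℂ φ (T0 φ + T1 φ) : ℂ) := by
    have hTadd : T0 φ + T1 φ = Matrix.toEuclideanLin (Q0 + Q1) φ := by
      rw [hT0, hT1, map_add]; rfl
    rw [hTadd]
    rw [PiLp.inner_apply]
    refine Finset.sum_congr rfl fun i _ => ?_
    simp only [RCLike.inner_apply, Matrix.toEuclideanLin_apply]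
    rw [mul_comm]; rfl
  -- the trace bound
  have hB : ‖T1 (T0 φ)‖ ^ 2 ≤ (Q0 * Q1).trace.re := by
    have hval : T1 (T0 φ) = (WithLp.equiv 2 (Fin D → ℂ)).symm ((Q1 * Q0).mulVec ψ) := by
      rw [hT1, hT0]
      simp only [Matrix.toEuclideanLin_apply, Equiv.apply_symm_apply,
        Matrix.mulVec_mulVec, hφdef]
      rfl
    have hnsq : ‖T1 (T0 φ)‖ ^ 2 = ∑ i, ‖(Q1 * Q0).mulVec ψ i‖ ^ 2 := by
      rw [hval, EuclideanSpace.norm_eq, Real.sq_sqrt]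
      · rfl
      · positivity
    have hfrob := frob_bound D (Q1 * Q0) ψ hψ
    have htr_eq : (((Q1 * Q0)ᴴ * (Q1 * Q0)).trace) = (Q0 * Q1).trace := by
      have hct : (Q1 * Q0)ᴴ = Q0 * Q1 := by
        rw [Matrix.conjTranspose_mul, h0h.eq, h1h.eq]
      rw [hct]
      have : Q0 * Q1 * (Q1 * Q0) = (Q0 * Q1) * Q0 := by
        rw [← mul_assoc, mul_assoc Q0 Q1 Q1, h1]
      rw [this, Matrix.trace_mul_comm, ← mul_assoc, h0]
    rw [hnsq]
    calc ∑ i, ‖(Q1 * Q0).mulVec ψ i‖ ^ 2 ≤ (((Q1 * Q0)ᴴ * (Q1 * Q0)).trace).re := hfrob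
      _ = (Q0 * Q1).trace.re := by rw [htr_eq]
  have := abstract_bound T0 T1 hs0 hi0 hs1 hi1 φ hφnorm ((Q0 * Q1).trace.re) hB
  rw [hlhs]
  exact this
end

section
/- Let Π₀ be a projector of rank at most 2^λ on an m-qubit space and let Π₁ = P Π₀ P for an m-qubit Pauli P. Then E_{P ← P_m}[Tr(Π₀Π₁)] ≤ 2^{2λ−m}, and consequently for every δ > 0, Pr_{P ← P_m}[Tr(Π₀Π₁) ≥ δ·2^{2λ}] ≤ δ^{-1}·2^{2λ−m}. -/
open scoped BigOperators Classical
open Matrix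

/-- The `m`-qubit Pauli operator `X^a Z^b`: `(X^a Z^b)|j⟩ = (-1)^{b·j} |j ⊕ a⟩`. -/
noncomputable def pauli (m : ℕ) (a b : Fin m → ZMod 2) :
    Matrix (Fin m → ZMod 2) (Fin m → ZMod 2) ℂ :=
  Matrix.of fun i j => if i = j + a then (-1 : ℂ) ^ (∑ k, (b k * j k).val) else 0

namespace PauliOverlapAux

lemma add_add_cancel' {m : ℕ} (x a : Fin m → ZMod 2) : x + a + a = x := by
  funext k
  have : ∀ u v : ZMod 2, u + v + v = u := by decide
  exact this (x k) (a k)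

lemma eq_add_iff' {m : ℕ} (x y a : Fin m → ZMod 2) : x = y + a ↔ y = x + a := by
  constructor <;> intro h <;> rw [h, add_add_cancel']

lemma pauli_apply' (m : ℕ) (a b : Fin m → ZMod 2) (i j : Fin m → ZMod 2) :
    pauli m a b i j = if j = i + a then (-1 : ℂ) ^ (∑ k, (b k * j k).val) else 0 := by
  rw [pauli, Matrix.of_apply]
  exact if_congr (eq_add_iff' i j a) rfl rfl

lemma pauli_conjT_apply (m : ℕ) (a b : Fin m → ZMod 2) (i j : Fin m → ZMod 2) :
    (pauli m a b)ᴴ i j = if j = i + a then (-1 : ℂ) ^ (∑ k, (b k * i k).val) else 0 := by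
  rw [conjTranspose_apply, pauli, Matrix.of_apply]
  split_ifs with h
  · rw [star_pow, star_neg, star_one]
  · exact star_zero _

lemma conj_apply (m : ℕ) (a b : Fin m → ZMod 2)
    (M : Matrix (Fin m → ZMod 2) (Fin m → ZMod 2) ℂ) (i j : Fin m → ZMod 2) :
    (pauli m a b * M * (pauli m a b)ᴴ) i j
      = (-1:ℂ) ^ (∑ k, (b k * (i + a) k).val) * (-1:ℂ) ^ (∑ k, (b k * (j + a) k).val)
        * M (i + a) (j + a) := by
  rw [Matrix.mul_apply]
  rw [Finset.sum_eq_single (j + a)]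
  · rw [Matrix.mul_apply, Finset.sum_eq_single (i + a)]
    · rw [pauli_apply', pauli_conjT_apply, if_pos rfl, if_pos (add_add_cancel' j a).symm]
      ring
    · intro k _ hk
      rw [pauli_apply', if_neg hk, zero_mul]
    · intro h; exact absurd (Finset.mem_univ _) h
  · intro l _ hl
    rw [pauli_conjT_apply, if_neg (fun h => hl ((eq_add_iff' j l a).mp h)), mul_zero]
  · intro h; exact absurd (Finset.mem_univ _) h

lemma neg_one_pow_congr {p q : ℕ} (h : p % 2 = q % 2) : (-1:ℂ)^p = (-1:ℂ)^q := by
  conv_lhs => rw [← Nat.div_add_mod p 2, pow_add, pow_mul, neg_one_sq, one_pow, one_mul]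
  conv_rhs => rw [← Nat.div_add_mod q 2, pow_add, pow_mul, neg_one_sq, one_pow, one_mul]
  rw [h]

lemma val_parity : ∀ u x y : ZMod 2, ((u*x).val + (u*y).val) % 2 = (u*(x+y)).val % 2 := by decide

lemma pauliSign_mul (m : ℕ) (b x y : Fin m → ZMod 2) :
    (-1:ℂ) ^ (∑ k, (b k * x k).val) * (-1:ℂ) ^ (∑ k, (b k * y k).val)
      = (-1:ℂ) ^ (∑ k, (b k * (x k + y k)).val) := by
  rw [← pow_add, ← Finset.sum_add_distrib]
  apply neg_one_pow_congr
  rw [Finset.sum_nat_mod, Finset.sum_nat_mod (f := fun k => (b k * (x k + y k)).val)]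
  congr 1
  exact Finset.sum_congr rfl fun k _ => val_parity (b k) (x k) (y k)

lemma zmod2_sum (f : ZMod 2 → ℂ) : ∑ c : ZMod 2, f c = f 0 + f 1 := by
  rw [show (Finset.univ : Finset (ZMod 2)) = {0, 1} by decide]
  simp

lemma sum_sign (m : ℕ) (z : Fin m → ZMod 2) :
    ∑ b : Fin m → ZMod 2, (-1:ℂ) ^ (∑ k, (b k * z k).val)
      = if z = 0 then (2:ℂ)^m else 0 := by
  have h1 : ∀ b : Fin m → ZMod 2, (-1:ℂ) ^ (∑ k, (b k * z k).val)
      = ∏ k, (-1:ℂ) ^ ((b k * z k).val) := by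
    intro b; rw [Finset.prod_pow_eq_pow_sum]
  simp_rw [h1]
  rw [← Fintype.piFinset_univ,
    ← Finset.prod_univ_sum (fun _ => (Finset.univ : Finset (ZMod 2)))
      (fun k c => (-1:ℂ)^((c * z k).val))]
  have h2 : ∀ k, (∑ c : ZMod 2, (-1:ℂ)^((c * z k).val))
      = if z k = 0 then 2 else 0 := by
    intro k
    rw [zmod2_sum]
    rcases (by decide : ∀ u : ZMod 2, u = 0 ∨ u = 1) (z k) with h | h <;>
      simp [h, ZMod.val_one] <;> norm_num
  simp_rw [h2]
  by_cases hz : z = 0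
  · simp [hz, Finset.prod_const]
  · obtain ⟨k, hk⟩ : ∃ k, z k ≠ 0 := by
      by_contra h; push_neg at h; exact hz (funext h)
    rw [if_neg hz]
    exact Finset.prod_eq_zero (Finset.mem_univ k) (by simp [hk])

lemma cross_sum (m : ℕ) (x y : Fin m → ZMod 2) :
    ∑ b : Fin m → ZMod 2,
      (-1:ℂ) ^ (∑ k, (b k * x k).val) * (-1:ℂ) ^ (∑ k, (b k * y k).val)
      = if x = y then (2:ℂ)^m else 0 := by
  simp_rw [pauliSign_mul]
  rw [show (fun b : Fin m → ZMod 2 => (-1:ℂ) ^ (∑ k, (b k * (x k + y k)).val))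
      = fun b => (-1:ℂ) ^ (∑ k, (b k * (x + y) k).val) from rfl]
  rw [sum_sign]
  congr 1
  simp only [eq_iff_iff]
  constructor
  · intro h; funext k
    have hk := congrFun h k
    revert hk
    have : ∀ u v : ZMod 2, u + v = 0 → u = v := by decide
    intro hk; exact this (x k) (y k) hk
  · intro h; subst h; funext k
    have : ∀ u : ZMod 2, u + u = 0 := by decide
    exact this (x k)

lemma grand_sum (m : ℕ) (Q0 : Matrix (Fin m → ZMod 2) (Fin m → ZMod 2) ℂ) :
    ∑ a : Fin m → ZMod 2, ∑ b : Fin m → ZMod 2,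
      (Q0 * (pauli m a b * Q0 * (pauli m a b)ᴴ)).trace
      = (2:ℂ)^m * Q0.trace^2 := by
  have hT : ∀ a b, (Q0 * (pauli m a b * Q0 * (pauli m a b)ᴴ)).trace
      = ∑ i, ∑ j, (Q0 i j * Q0 (j+a) (i+a)) *
          ((-1:ℂ) ^ (∑ k, (b k * (j + a) k).val) * (-1:ℂ) ^ (∑ k, (b k * (i + a) k).val)) := by
    intro a b
    rw [Matrix.trace]
    apply Finset.sum_congr rfl; intro i _
    rw [Matrix.diag_apply, Matrix.mul_apply]
    apply Finset.sum_congr rfl; intro j _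
    rw [conj_apply]
    ring
  simp_rw [hT]
  have step1 : ∀ a : Fin m → ZMod 2,
      ∑ b : Fin m → ZMod 2, ∑ i, ∑ j, (Q0 i j * Q0 (j+a) (i+a)) *
          ((-1:ℂ) ^ (∑ k, (b k * (j + a) k).val) * (-1:ℂ) ^ (∑ k, (b k * (i + a) k).val))
      = ∑ i, (Q0 i i * Q0 (i+a) (i+a)) * (2:ℂ)^m := by
    intro a
    rw [Finset.sum_comm]
    apply Finset.sum_congr rfl; intro i _
    rw [Finset.sum_comm]
    have hj : ∀ j, ∑ b : Fin m → ZMod 2, (Q0 i j * Q0 (j+a) (i+a)) *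
          ((-1:ℂ) ^ (∑ k, (b k * (j + a) k).val) * (-1:ℂ) ^ (∑ k, (b k * (i + a) k).val))
        = (Q0 i j * Q0 (j+a) (i+a)) * (if j + a = i + a then (2:ℂ)^m else 0) := by
      intro j
      rw [← Finset.mul_sum, cross_sum]
    simp_rw [hj]
    have hcond : ∀ j : Fin m → ZMod 2, (j + a = i + a) = (j = i) := by
      intro j
      simp only [eq_iff_iff]
      constructor
      · intro h
        have := congrArg (· + a) h
        simpa [add_add_cancel'] using this
      · intro h; rw [h]
    simp_rw [hcond]
    simp only [mul_ite, mul_zero]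
    rw [Finset.sum_ite_eq' Finset.univ i (fun j => Q0 i j * Q0 (j+a) (i+a) * (2:ℂ)^m)]
    simp
  simp_rw [step1]
  rw [Finset.sum_comm]
  have step2 : ∀ i, ∑ a : Fin m → ZMod 2, (Q0 i i * Q0 (i+a) (i+a)) * (2:ℂ)^m
      = Q0 i i * Q0.trace * (2:ℂ)^m := by
    intro i
    rw [← Finset.sum_mul, ← Finset.mul_sum]
    congr 2
    rw [Matrix.trace]
    exact Fintype.sum_equiv (Equiv.addLeft i) _ _ (fun a => rfl)
  simp_rw [step2]
  rw [← Finset.sum_mul, ← Finset.sum_mul, Matrix.trace]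
  simp only [Matrix.diag_apply]
  ring

section spec
variable {n : Type*} [Fintype n] [DecidableEq n] {A : Matrix n n ℂ}

lemma eig01 (hproj : A * A = A) (hherm : A.IsHermitian) (i : n) :
    hherm.eigenvalues i = 0 ∨ hherm.eigenvalues i = 1 := by
  set U : Matrix n n ℂ := (hherm.eigenvectorUnitary : Matrix n n ℂ) with hU
  set D : Matrix n n ℂ := diagonal (RCLike.ofReal ∘ hherm.eigenvalues) with hD
  have hspec := hherm.spectral_theorem
  rw [Unitary.conjStarAlgAut_apply] at hspec
  have hUU : star U * U = 1 := (Matrix.mem_unitaryGroup_iff').mp hherm.eigenvectorUnitary.2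
  have hDD : D * D = D := by
    have h2 : (U * D * star U) * (U * D * star U) = U * D * star U := by
      rw [← hspec]; exact hproj
    have h3 : U * (D * D) * star U = U * D * star U := by
      calc U * (D * D) * star U = U * (D * ((star U * U) * D)) * star U := by rw [hUU, one_mul]
        _ = (U * D * star U) * (U * D * star U) := by noncomm_ring
        _ = U * D * star U := h2
    have h4 : star U * (U * (D * D) * star U) * U = star U * (U * D * star U) * U := by rw [h3]
    calc D * D = (star U * U) * (D * D) * (star U * U) := by rw [hUU]; noncomm_ring
      _ = star U * (U * (D * D) * star U) * U := by noncomm_ring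
      _ = star U * (U * D * star U) * U := h4
      _ = (star U * U) * D * (star U * U) := by noncomm_ring
      _ = D := by rw [hUU]; noncomm_ring
  have h : ((hherm.eigenvalues i : ℂ)) * (hherm.eigenvalues i : ℂ) = (hherm.eigenvalues i) := by
    have h' := hDD
    rw [hD, diagonal_mul_diagonal] at h'
    have := congrFun (Matrix.diagonal_injective h') i
    simpa using this
  have hr : (hherm.eigenvalues i) * (hherm.eigenvalues i) = hherm.eigenvalues i := by
    exact_mod_cast h
  have h5 : hherm.eigenvalues i * (hherm.eigenvalues i - 1) = 0 := by linear_combination hr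
  rcases mul_eq_zero.mp h5 with h0 | h1
  · exact Or.inl h0
  · exact Or.inr (by linarith [sub_eq_zero.mp h1])

lemma trace_eq_sum_eigs (hherm : A.IsHermitian) :
    A.trace = ((∑ i, hherm.eigenvalues i : ℝ) : ℂ) := by
  have hUU : star (hherm.eigenvectorUnitary : Matrix n n ℂ) * hherm.eigenvectorUnitary
      = 1 := (Matrix.mem_unitaryGroup_iff').mp hherm.eigenvectorUnitary.2
  conv_lhs => rw [hherm.spectral_theorem, Unitary.conjStarAlgAut_apply]
  rw [Matrix.trace_mul_comm, ← mul_assoc, hUU, one_mul, Matrix.trace_diagonal]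
  push_cast
  rfl

lemma trace_mul_conjT_re_nonneg (B : Matrix n n ℂ) : 0 ≤ (B * Bᴴ).trace.re := by
  have h : (B * Bᴴ).trace = ∑ i, ∑ j, (Complex.normSq (B i j) : ℂ) := by
    rw [Matrix.trace]
    apply Finset.sum_congr rfl; intro i _
    rw [Matrix.diag_apply, Matrix.mul_apply]
    apply Finset.sum_congr rfl; intro j _
    rw [Matrix.conjTranspose_apply, ← Complex.mul_conj]
    rfl
  rw [h]
  rw [Complex.re_sum]
  apply Finset.sum_nonneg; intro i _
  rw [Complex.re_sum]
  apply Finset.sum_nonneg; intro j _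
  simpa using Complex.normSq_nonneg (B i j)

set_option maxHeartbeats 1000000 in
lemma overlap_eq (Q0 P : Matrix n n ℂ) (hproj : Q0 * Q0 = Q0) (hherm : Q0.IsHermitian) :
    (Q0 * (P * Q0 * Pᴴ)).trace = ((Q0 * P * Q0) * (Q0 * P * Q0)ᴴ).trace := by
  have hBH : (Q0 * P * Q0)ᴴ = Q0 * Pᴴ * Q0 := by
    rw [conjTranspose_mul, conjTranspose_mul, hherm.eq]
    noncomm_ring
  have e1 : (Q0 * P * Q0) * (Q0 * P * Q0)ᴴ = (Q0 * P * Q0 * Pᴴ) * Q0 := by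
    rw [hBH,
      show (Q0 * P * Q0) * (Q0 * Pᴴ * Q0) = Q0 * P * (Q0 * Q0) * Pᴴ * Q0 from by noncomm_ring,
      hproj]
  have e2 : Q0 * (Q0 * P * Q0 * Pᴴ) = Q0 * (P * Q0 * Pᴴ) :=
    calc Q0 * (Q0 * P * Q0 * Pᴴ) = (Q0 * Q0) * (P * Q0 * Pᴴ) := by noncomm_ring
      _ = Q0 * (P * Q0 * Pᴴ) := by rw [hproj]
  rw [e1]
  conv_rhs => rw [Matrix.trace_mul_comm]
  rw [e2]
end spec

end PauliOverlapAux

open PauliOverlapAux in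
/-- For a projector `Π₀` of rank at most `2^λ` on the `m`-qubit space and
`Π₁ = P Π₀ P†` for a uniformly random `m`-qubit Pauli `P`:
`E_P[Tr(Π₀Π₁)] ≤ 2^{2λ−m}`, and for every `δ > 0` the fraction of Paulis with
`Tr(Π₀Π₁) ≥ δ·2^{2λ}` is at most `δ⁻¹·2^{2λ−m}`. -/
theorem pauli_conjugated_projector_overlap (m lam : ℕ)
    (Q0 : Matrix (Fin m → ZMod 2) (Fin m → ZMod 2) ℂ)
    (hproj : Q0 * Q0 = Q0) (hherm : Q0.IsHermitian) (hrank : Q0.rank ≤ 2 ^ lam) :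
    ((1 / 4 ^ m : ℝ) * ∑ a : Fin m → ZMod 2, ∑ b : Fin m → ZMod 2,
        (Q0 * (pauli m a b * Q0 * (pauli m a b)ᴴ)).trace.re
      ≤ 2 ^ (2 * lam) / 2 ^ m)
    ∧ ∀ δ : ℝ, 0 < δ →
      (((Finset.univ.filter (fun p : (Fin m → ZMod 2) × (Fin m → ZMod 2) =>
          δ * 2 ^ (2 * lam) ≤
            (Q0 * (pauli m p.1 p.2 * Q0 * (pauli m p.1 p.2)ᴴ)).trace.re)).card : ℝ)
        / 4 ^ m ≤ δ⁻¹ * 2 ^ (2 * lam) / 2 ^ m) := by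
  classical
  set t : ℝ := ∑ i, hherm.eigenvalues i with ht
  have htr : Q0.trace = (t : ℂ) := trace_eq_sum_eigs hherm
  have ht0 : 0 ≤ t := Finset.sum_nonneg (fun i _ => by
    rcases eig01 hproj hherm i with h | h <;> simp [h])
  have htle : t ≤ (2:ℝ)^lam := by
    have h1 : t ≤ (Q0.rank : ℝ) := by
      rw [hherm.rank_eq_card_non_zero_eigs, Fintype.card_subtype]
      have he : t = ∑ i ∈ Finset.univ.filter (fun i => hherm.eigenvalues i ≠ 0),
          hherm.eigenvalues i := by
        rw [ht]
        exact (Finset.sum_filter_of_ne (fun i _ h => h)).symm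
      rw [he]
      calc ∑ i ∈ Finset.univ.filter (fun i => hherm.eigenvalues i ≠ 0), hherm.eigenvalues i
          ≤ ∑ _i ∈ Finset.univ.filter (fun i => hherm.eigenvalues i ≠ 0), (1:ℝ) := by
            apply Finset.sum_le_sum
            intro i _
            rcases eig01 hproj hherm i with h | h <;> simp [h]
        _ = _ := by simp
    calc t ≤ (Q0.rank : ℝ) := h1
      _ ≤ ((2^lam : ℕ) : ℝ) := by exact_mod_cast hrank
      _ = (2:ℝ)^lam := by push_cast; ring
  have hsum : ∑ a : Fin m → ZMod 2, ∑ b : Fin m → ZMod 2,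
      (Q0 * (pauli m a b * Q0 * (pauli m a b)ᴴ)).trace = ((2:ℝ)^m * t^2 : ℝ) := by
    rw [grand_sum, htr]
    push_cast
    ring
  have hsum_re : ∑ a : Fin m → ZMod 2, ∑ b : Fin m → ZMod 2,
      (Q0 * (pauli m a b * Q0 * (pauli m a b)ᴴ)).trace.re = (2:ℝ)^m * t^2 := by
    have h := congrArg Complex.re hsum
    simp only [Complex.re_sum, Complex.ofReal_re] at h
    exact h
  have hnn : ∀ a b : Fin m → ZMod 2,
      0 ≤ (Q0 * (pauli m a b * Q0 * (pauli m a b)ᴴ)).trace.re := by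
    intro a b
    rw [overlap_eq Q0 (pauli m a b) hproj hherm]
    exact trace_mul_conjT_re_nonneg _
  have ht2 : t^2 ≤ (2:ℝ)^(2*lam) := by
    have h := mul_le_mul htle htle ht0 (by positivity : (0:ℝ) ≤ (2:ℝ)^lam)
    calc t^2 = t * t := sq t
      _ ≤ (2:ℝ)^lam * (2:ℝ)^lam := h
      _ = (2:ℝ)^(2*lam) := by rw [two_mul, pow_add]
  have h4m : (4:ℝ)^m = 2^m * 2^m := by
    rw [show (4:ℝ) = 2 * 2 from by norm_num, mul_pow]
  constructor
  · rw [hsum_re]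
    have h2m : (0:ℝ) < 2^m := by positivity
    have heq : (1 / 4^m : ℝ) * (2^m * t^2) = t^2 / 2^m := by
      rw [h4m]; field_simp
    rw [heq]
    gcongr
  · intro δ hδ
    set F := Finset.univ.filter (fun p : (Fin m → ZMod 2) × (Fin m → ZMod 2) =>
        δ * 2 ^ (2 * lam) ≤ (Q0 * (pauli m p.1 p.2 * Q0 * (pauli m p.1 p.2)ᴴ)).trace.re)
      with hF
    have hbound : (F.card : ℝ) * (δ * 2^(2*lam)) ≤ (2:ℝ)^m * t^2 := by
      have h1 : (F.card : ℝ) * (δ * 2^(2*lam))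
          ≤ ∑ p ∈ F, (Q0 * (pauli m p.1 p.2 * Q0 * (pauli m p.1 p.2)ᴴ)).trace.re := by
        rw [← nsmul_eq_mul]
        apply Finset.card_nsmul_le_sum
        intro p hp
        exact (Finset.mem_filter.mp hp).2
      have h2 : ∑ p ∈ F, (Q0 * (pauli m p.1 p.2 * Q0 * (pauli m p.1 p.2)ᴴ)).trace.re
          ≤ ∑ p : (Fin m → ZMod 2) × (Fin m → ZMod 2),
              (Q0 * (pauli m p.1 p.2 * Q0 * (pauli m p.1 p.2)ᴴ)).trace.re := by
        apply Finset.sum_le_sum_of_subset_of_nonneg (Finset.subset_univ F)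
        intro p _ _
        exact hnn p.1 p.2
      have h3 : ∑ p : (Fin m → ZMod 2) × (Fin m → ZMod 2),
          (Q0 * (pauli m p.1 p.2 * Q0 * (pauli m p.1 p.2)ᴴ)).trace.re = (2:ℝ)^m * t^2 := by
        rw [Fintype.sum_prod_type]
        exact hsum_re
      linarith
    have hcδ : (F.card : ℝ) * δ ≤ 2^m := by
      have hpos : (0:ℝ) < 2^(2*lam) := by positivity
      have := hbound
      have h' : (F.card : ℝ) * δ * 2^(2*lam) ≤ 2^m * 2^(2*lam) := by
        have hub : (2:ℝ)^m * t^2 ≤ 2^m * 2^(2*lam) := by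
          have h2m : (0:ℝ) ≤ 2^m := by positivity
          exact mul_le_mul_of_nonneg_left ht2 h2m
        calc (F.card : ℝ) * δ * 2^(2*lam) = (F.card : ℝ) * (δ * 2^(2*lam)) := by ring
          _ ≤ (2:ℝ)^m * t^2 := hbound
          _ ≤ 2^m * 2^(2*lam) := hub
      exact le_of_mul_le_mul_right h' hpos
    rw [div_le_div_iff₀ (by positivity) (by positivity : (0:ℝ) < 2^m)]
    have hone : (1:ℝ) ≤ 2^(2*lam) := one_le_pow₀ (by norm_num)
    have hc0 : (0:ℝ) ≤ (F.card : ℝ) := Nat.cast_nonneg _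
    have hδi : (0:ℝ) < δ⁻¹ := inv_pos.mpr hδ
    have hc : (F.card : ℝ) ≤ δ⁻¹ * 2^m := by
      have h' := (le_div_iff₀ hδ).mpr hcδ
      calc (F.card : ℝ) ≤ 2^m / δ := h'
        _ = δ⁻¹ * 2^m := by rw [div_eq_mul_inv, mul_comm]
    calc (F.card : ℝ) * 2^m ≤ (δ⁻¹ * 2^m) * 2^m := by
          exact mul_le_mul_of_nonneg_right hc (by positivity)
      _ = δ⁻¹ * 4^m := by rw [h4m]; ring
      _ = δ⁻¹ * 4^m * 1 := by ring
      _ ≤ δ⁻¹ * 4^m * 2^(2*lam) :=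
          mul_le_mul_of_nonneg_left hone (by positivity)
      _ = δ⁻¹ * 2^(2*lam) * 4^m := by ring
end

section
/- Let Π₀ be a projector of rank at most 2^λ on an m-qubit space, Π₁ = PΠ₀P, and p = ‖Π₀ + Π₁‖ the operator norm. Then Pr_{P ← P_m}[p ≥ 1 + 3·2^{−(m−4λ)/3}] ≤ 2^{−(m−4λ)/3}. -/
open scoped BigOperators Classical
open Matrix

/-! ### Auxiliary character lemmas -/

noncomputable def sgn (c : ZMod 2) : ℂ := if c = 0 then 1 else -1

lemma sgn_add (c d : ZMod 2) : sgn (c + d) = sgn c * sgn d := by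
  obtain rfl | rfl : c = 0 ∨ c = 1 := (by revert c; decide)
  <;> obtain rfl | rfl : d = 0 ∨ d = 1 := (by revert d; decide)
  <;> simp [sgn] <;> decide

lemma sgn_sq (c : ZMod 2) : sgn c * sgn c = 1 := by
  obtain rfl | rfl : c = 0 ∨ c = 1 := (by revert c; decide)
  <;> simp [sgn]

lemma neg_one_pow_val (c : ZMod 2) : ((-1 : ℂ)) ^ c.val = sgn c := by
  obtain rfl | rfl : c = 0 ∨ c = 1 := (by revert c; decide)
  <;> simp [sgn, ZMod.val_one]

lemma chi_eq {m : ℕ} (b v : Fin m → ZMod 2) :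
    ((-1 : ℂ)) ^ (∑ k, (b k * v k).val) = ∏ k, sgn (b k * v k) := by
  rw [← Finset.prod_pow_eq_pow_sum]
  exact Finset.prod_congr rfl fun k _ => neg_one_pow_val _

lemma sum_zmod2 (f : ZMod 2 → ℂ) : (∑ x : ZMod 2, f x) = f 0 + f 1 := by
  exact Fin.sum_univ_two f

lemma sum_sgn_single (v : ZMod 2) :
    (∑ x : ZMod 2, sgn (x * v)) = if v = 0 then 2 else 0 := by
  rw [sum_zmod2]
  obtain rfl | rfl : v = 0 ∨ v = 1 := (by revert v; decide)
  <;> simp [sgn] <;> norm_num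

lemma sum_prod_sgn {m : ℕ} (v : Fin m → ZMod 2) :
    (∑ b : Fin m → ZMod 2, ∏ k, sgn (b k * v k)) = if v = 0 then (2:ℂ)^m else 0 := by
  have key := Finset.sum_prod_piFinset (ι := Fin m) (Finset.univ : Finset (ZMod 2))
    (fun k x => sgn (x * v k))
  rw [Fintype.piFinset_univ] at key
  rw [key]
  have h : ∀ k, (∑ x : ZMod 2, sgn (x * v k)) = if v k = 0 then 2 else 0 :=
    fun k => sum_sgn_single (v k)
  by_cases hv : v = 0
  · subst hv; simp [h, sgn]
  · obtain ⟨k, hk⟩ := Function.ne_iff.mp hv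
    rw [if_neg hv]
    apply Finset.prod_eq_zero (Finset.mem_univ k)
    rw [h k, if_neg (by simpa using hk)]

lemma sum_chi_pair {m : ℕ} (u w : Fin m → ZMod 2) :
    (∑ b : Fin m → ZMod 2, (∏ k, sgn (b k * u k)) * (∏ k, sgn (b k * w k)))
      = if u = w then (2:ℂ)^m else 0 := by
  have h : ∀ b : Fin m → ZMod 2,
      (∏ k, sgn (b k * u k)) * (∏ k, sgn (b k * w k)) = ∏ k, sgn (b k * (u + w) k) := by
    intro b
    rw [← Finset.prod_mul_distrib]
    exact Finset.prod_congr rfl fun k _ => by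
      rw [Pi.add_apply, mul_add, sgn_add]
  simp_rw [h]
  rw [sum_prod_sgn]
  congr 1
  have h2 : ∀ x y : ZMod 2, x + y = 0 ↔ x = y := by decide
  simp only [eq_iff_iff]
  constructor
  · intro hz; funext k
    exact (h2 _ _).mp (congrFun hz k)
  · intro hz; funext k
    exact (h2 (u k) (w k)).mpr (congrFun hz k)

/-! ### Entries of Pauli conjugation -/

lemma add2_swap {m : ℕ} (a i j : Fin m → ZMod 2) : i = j + a ↔ j = i + a := by
  have h : ∀ x y : ZMod 2, x + y + y = x := by decide
  constructor <;> rintro rfl <;> funext x <;> exact (h _ _).symm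

lemma star_sgn (c : ZMod 2) : star (sgn c) = sgn c := by
  obtain rfl | rfl : c = 0 ∨ c = 1 := (by revert c; decide)
  <;> simp [sgn]

lemma pauli_apply' {m : ℕ} (a b i j : Fin m → ZMod 2) :
    pauli m a b i j = if j = i + a then (∏ k, sgn (b k * j k)) else 0 := by
  rw [pauli, Matrix.of_apply, chi_eq]
  exact if_congr (add2_swap a i j) rfl rfl

lemma pauli_conjT_apply {m : ℕ} (a b i j : Fin m → ZMod 2) :
    (pauli m a b)ᴴ i j = if i = j + a then (∏ k, sgn (b k * i k)) else 0 := by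
  rw [Matrix.conjTranspose_apply, pauli_apply']
  split
  · rw [← starRingEnd_apply, map_prod]
    exact Finset.prod_congr rfl fun k _ => star_sgn _
  · exact star_zero _

lemma pauli_conj_entry {m : ℕ} (a b : Fin m → ZMod 2)
    (M : Matrix (Fin m → ZMod 2) (Fin m → ZMod 2) ℂ) (i j : Fin m → ZMod 2) :
    (pauli m a b * M * (pauli m a b)ᴴ) i j
      = (∏ k, sgn (b k * (i + a) k)) * (∏ k, sgn (b k * (j + a) k)) * M (i + a) (j + a) := by
  have h1 : ∀ l, (pauli m a b * M) i l = (∏ k, sgn (b k * (i + a) k)) * M (i + a) l := by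
    intro l
    rw [Matrix.mul_apply, Finset.sum_eq_single (i + a)]
    · rw [pauli_apply', if_pos rfl]
    · intro k _ hk
      rw [pauli_apply', if_neg hk, zero_mul]
    · simp
  rw [Matrix.mul_apply, Finset.sum_eq_single (j + a)]
  · rw [h1, pauli_conjT_apply, if_pos rfl]; ring
  · intro l _ hl
    rw [pauli_conjT_apply, if_neg hl, mul_zero]
  · simp

lemma pauli_mul_conjT {m : ℕ} (a b : Fin m → ZMod 2) :
    pauli m a b * (pauli m a b)ᴴ = 1 := by
  ext i j
  have h := pauli_conj_entry a b 1 i j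
  rw [mul_one] at h
  rw [h, Matrix.one_apply, Matrix.one_apply]
  by_cases hij : i = j
  · subst hij
    rw [if_pos rfl, if_pos rfl, mul_one, ← Finset.prod_mul_distrib,
      Finset.prod_eq_one fun k _ => sgn_sq _]
  · rw [if_neg (fun hc => hij (add_left_injective a hc)), if_neg hij, mul_zero]

lemma pauli_conjT_mul {m : ℕ} (a b : Fin m → ZMod 2) :
    (pauli m a b)ᴴ * pauli m a b = 1 :=
  mul_eq_one_comm.mp (pauli_mul_conjT a b)

/-! ### The Pauli-average of the conjugated projector trace -/

lemma sum_pauli_trace {m : ℕ} (Q0 : Matrix (Fin m → ZMod 2) (Fin m → ZMod 2) ℂ) :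
    (∑ p : (Fin m → ZMod 2) × (Fin m → ZMod 2),
        trace (Q0 * (pauli m p.1 p.2 * Q0 * (pauli m p.1 p.2)ᴴ)))
      = (2:ℂ)^m * (trace Q0)^2 := by
  rw [Fintype.sum_prod_type]
  have step1 : ∀ a : Fin m → ZMod 2,
      (∑ b : Fin m → ZMod 2, trace (Q0 * (pauli m a b * Q0 * (pauli m a b)ᴴ)))
        = (2:ℂ)^m * ∑ i, Q0 i i * Q0 (i + a) (i + a) := by
    intro a
    have htr : ∀ b : Fin m → ZMod 2,
        trace (Q0 * (pauli m a b * Q0 * (pauli m a b)ᴴ))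
          = ∑ i, ∑ j, ((∏ k, sgn (b k * (j + a) k)) * (∏ k, sgn (b k * (i + a) k)))
              * (Q0 i j * Q0 (j + a) (i + a)) := by
      intro b
      rw [Matrix.trace]
      refine Finset.sum_congr rfl fun i _ => ?_
      rw [Matrix.diag_apply, Matrix.mul_apply]
      refine Finset.sum_congr rfl fun j _ => ?_
      rw [pauli_conj_entry]
      ring
    simp_rw [htr]
    rw [Finset.sum_comm]
    have hswap : ∀ i : Fin m → ZMod 2,
        (∑ b : Fin m → ZMod 2, ∑ j, ((∏ k, sgn (b k * (j + a) k)) * (∏ k, sgn (b k * (i + a) k)))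
            * (Q0 i j * Q0 (j + a) (i + a)))
          = (2:ℂ)^m * (Q0 i i * Q0 (i + a) (i + a)) := by
      intro i
      rw [Finset.sum_comm]
      have hj : ∀ j : Fin m → ZMod 2,
          (∑ b : Fin m → ZMod 2, ((∏ k, sgn (b k * (j + a) k)) * (∏ k, sgn (b k * (i + a) k)))
              * (Q0 i j * Q0 (j + a) (i + a)))
            = if j = i then (2:ℂ)^m * (Q0 i j * Q0 (j + a) (i + a)) else 0 := by
        intro j
        rw [← Finset.sum_mul, sum_chi_pair]
        have : (j + a = i + a) ↔ (j = i) := add_left_injective a |>.eq_iff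
        rw [if_congr this rfl rfl]
        split <;> simp
      simp_rw [hj]
      simp
    simp_rw [hswap]
    rw [← Finset.mul_sum]
  simp_rw [step1]
  rw [← Finset.mul_sum]
  congr 1
  rw [Finset.sum_comm]
  have hinner : ∀ i : Fin m → ZMod 2,
      (∑ a : Fin m → ZMod 2, Q0 i i * Q0 (i + a) (i + a)) = Q0 i i * trace Q0 := by
    intro i
    rw [← Finset.mul_sum]
    congr 1
    exact Fintype.sum_equiv (Equiv.addLeft i) _ _ fun a => rfl
  simp_rw [hinner]
  rw [← Finset.sum_mul, sq]
  rfl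

/-! ### Generic matrix inner-product lemmas -/

section Generic

variable {n : Type*} [Fintype n] [DecidableEq n]

lemma dot_self_eq (A : Matrix n n ℂ) (hA : A * A = A) (hAh : A.IsHermitian) (x : n → ℂ) :
    dotProduct (star x) (A.mulVec x)
      = dotProduct (star (A.mulVec x)) (A.mulVec x) :=
  (calc star (A.mulVec x) ⬝ᵥ (A.mulVec x)
      = (star x ᵥ* Aᴴ) ⬝ᵥ (A.mulVec x) := by rw [Matrix.star_mulVec]
    _ = ((star x ᵥ* Aᴴ) ᵥ* A) ⬝ᵥ x := by rw [Matrix.dotProduct_mulVec]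
    _ = (star x ᵥ* (Aᴴ * A)) ⬝ᵥ x := by rw [Matrix.vecMul_vecMul]
    _ = (star x ᵥ* A) ⬝ᵥ x := by rw [hAh.eq, hA]
    _ = star x ⬝ᵥ (A.mulVec x) := (Matrix.dotProduct_mulVec _ _ _).symm).symm

lemma dot_cross (A B : Matrix n n ℂ) (hAh : A.IsHermitian) (x : n → ℂ) :
    dotProduct (star (A.mulVec x)) (B.mulVec x)
      = dotProduct (star x) ((A * B).mulVec x) :=
  calc star (A.mulVec x) ⬝ᵥ (B.mulVec x)
      = (star x ᵥ* Aᴴ) ⬝ᵥ (B.mulVec x) := by rw [Matrix.star_mulVec]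
    _ = ((star x ᵥ* Aᴴ) ᵥ* B) ⬝ᵥ x := by rw [Matrix.dotProduct_mulVec]
    _ = (star x ᵥ* (A * B)) ⬝ᵥ x := by rw [Matrix.vecMul_vecMul, hAh.eq]
    _ = star x ⬝ᵥ ((A * B).mulVec x) := (Matrix.dotProduct_mulVec _ _ _).symm

theorem quad_bound (Q0 Q1 : Matrix n n ℂ)
    (h0 : Q0 * Q0 = Q0) (h0h : Q0.IsHermitian) (h1 : Q1 * Q1 = Q1) (h1h : Q1.IsHermitian)
    (ψ : n → ℂ) (hψ : ∑ i, ‖ψ i‖ ^ 2 = 1) :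
    (∑ i, star (ψ i) * ((Q0 + Q1).mulVec ψ) i).re
      ≤ 1 + 3 * Real.sqrt (∑ i, ∑ j, ‖(Q0 * Q1) i j‖ ^ 2) := by
  classical
  set F : ℝ := ∑ i, ∑ j, ‖(Q0 * Q1) i j‖ ^ 2 with hF
  have hFnn : 0 ≤ F := Finset.sum_nonneg fun i _ => Finset.sum_nonneg fun j _ => sq_nonneg _
  set ψ' : EuclideanSpace ℂ n := (WithLp.equiv 2 _).symm ψ with hψ'
  set u : EuclideanSpace ℂ n := (WithLp.equiv 2 _).symm (Q0.mulVec ψ) with hu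
  set v : EuclideanSpace ℂ n := (WithLp.equiv 2 _).symm (Q1.mulVec ψ) with hv
  set w : EuclideanSpace ℂ n := (WithLp.equiv 2 _).symm ((Q0 * Q1).mulVec ψ) with hw
  have hnormψ : ‖ψ'‖ = 1 := by
    rw [EuclideanSpace.norm_eq]
    simp only [hψ', WithLp.equiv_symm_apply, PiLp.toLp_apply]
    rw [hψ]; exact Real.sqrt_one
  have hiu : (inner ℂ ψ' u) = inner ℂ u u := by
    show (Q0 *ᵥ ψ) ⬝ᵥ star ψ = (Q0 *ᵥ ψ) ⬝ᵥ star (Q0 *ᵥ ψ)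
    rw [dotProduct_comm, dotProduct_comm (Q0 *ᵥ ψ)]
    exact dot_self_eq Q0 h0 h0h ψ
  have hiv : (inner ℂ ψ' v) = inner ℂ v v := by
    show (Q1 *ᵥ ψ) ⬝ᵥ star ψ = (Q1 *ᵥ ψ) ⬝ᵥ star (Q1 *ᵥ ψ)
    rw [dotProduct_comm, dotProduct_comm (Q1 *ᵥ ψ)]
    exact dot_self_eq Q1 h1 h1h ψ
  have hiw : (inner ℂ u v) = inner ℂ ψ' w := by
    show (Q1 *ᵥ ψ) ⬝ᵥ star (Q0 *ᵥ ψ) = ((Q0 * Q1) *ᵥ ψ) ⬝ᵥ star ψ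
    rw [dotProduct_comm, dotProduct_comm ((Q0 * Q1) *ᵥ ψ)]
    exact dot_cross Q0 Q1 h0h ψ
  have hwF : ‖w‖ ≤ Real.sqrt F := by
    have hw2 : ‖w‖ ^ 2 ≤ F := by
      have hnw : ‖w‖ ^ 2 = ∑ i, ‖(Q0 * Q1).mulVec ψ i‖ ^ 2 := by
        rw [EuclideanSpace.norm_eq, Real.sq_sqrt]
        · rfl
        · exact Finset.sum_nonneg fun i _ => sq_nonneg _
      rw [hnw, hF]
      refine Finset.sum_le_sum fun i _ => ?_
      set r : EuclideanSpace ℂ n := (WithLp.equiv 2 _).symm (fun j => star ((Q0 * Q1) i j)) with hr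
      have hri : (inner ℂ r ψ') = (Q0 * Q1).mulVec ψ i := by
        rw [EuclideanSpace.inner_eq_star_dotProduct]
        simp [hr, hψ', dotProduct, Matrix.mulVec, mul_comm]
      have hcs : ‖(inner ℂ r ψ')‖ ≤ ‖r‖ * ‖ψ'‖ := norm_inner_le_norm r ψ'
      have hrn : ‖r‖ ^ 2 = ∑ j, ‖(Q0 * Q1) i j‖ ^ 2 := by
        rw [EuclideanSpace.norm_eq, Real.sq_sqrt]
        · simp [hr, WithLp.equiv_symm_apply, PiLp.toLp_apply]
        · exact Finset.sum_nonneg fun j _ => sq_nonneg _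
      calc ‖(Q0 * Q1).mulVec ψ i‖ ^ 2 = ‖(inner ℂ r ψ')‖ ^ 2 := by rw [hri]
        _ ≤ (‖r‖ * ‖ψ'‖) ^ 2 := by
            exact pow_le_pow_left₀ (norm_nonneg _) hcs 2
        _ = ‖r‖ ^ 2 := by rw [hnormψ]; ring
        _ = ∑ j, ‖(Q0 * Q1) i j‖ ^ 2 := hrn
    have := Real.sqrt_le_sqrt hw2
    rwa [Real.sqrt_sq (norm_nonneg _)] at this
  set s : ℝ := (∑ i, star (ψ i) * ((Q0 + Q1).mulVec ψ) i).re with hs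
  have cre : ∀ z : ℂ, z.re = RCLike.re z := fun z => rfl
  have hs_eq : s = ‖u‖ ^ 2 + ‖v‖ ^ 2 := by
    have hsum : (∑ i, star (ψ i) * ((Q0 + Q1).mulVec ψ) i)
        = (inner ℂ ψ' u) + inner ℂ ψ' v := by
      show _ = (Q0 *ᵥ ψ) ⬝ᵥ star ψ + (Q1 *ᵥ ψ) ⬝ᵥ star ψ
      rw [dotProduct_comm (Q0 *ᵥ ψ), dotProduct_comm (Q1 *ᵥ ψ)]
      rw [Matrix.add_mulVec, ← dotProduct_add]
      rfl
    rw [hs, hsum, hiu, hiv, Complex.add_re, cre, cre,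
      inner_self_eq_norm_sq u, inner_self_eq_norm_sq v]
  have hsnn : 0 ≤ s := by rw [hs_eq]; positivity
  have hs_le : s ≤ ‖u + v‖ := by
    have hre : ((inner ℂ ψ' (u + v))).re = s := by
      rw [inner_add_right, Complex.add_re, hiu, hiv, hs_eq, cre, cre,
        inner_self_eq_norm_sq u, inner_self_eq_norm_sq v]
    calc s = ((inner ℂ ψ' (u + v))).re := hre.symm
      _ ≤ ‖(inner ℂ ψ' (u + v))‖ := by rw [cre]; exact RCLike.re_le_norm _
      _ ≤ ‖ψ'‖ * ‖u + v‖ := norm_inner_le_norm _ _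
      _ = ‖u + v‖ := by rw [hnormψ, one_mul]
  have huv : ‖u + v‖ ^ 2 ≤ s + 2 * Real.sqrt F := by
    have hcross : ((inner ℂ u v)).re ≤ Real.sqrt F := by
      rw [hiw]
      calc ((inner ℂ ψ' w)).re ≤ ‖(inner ℂ ψ' w)‖ := by
            rw [cre]; exact RCLike.re_le_norm _
        _ ≤ ‖ψ'‖ * ‖w‖ := norm_inner_le_norm _ _
        _ = ‖w‖ := by rw [hnormψ, one_mul]
        _ ≤ Real.sqrt F := hwF
    have hexp : ‖u + v‖ ^ 2 = ‖u‖ ^ 2 + 2 * ((inner ℂ u v)).re + ‖v‖ ^ 2 := by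
      rw [cre]; exact norm_add_sq u v
    rw [hexp]
    have h' : ‖u‖ ^ 2 + ‖v‖ ^ 2 = s := hs_eq.symm
    linarith [hcross]
  have hs2 : s ^ 2 ≤ s + 2 * Real.sqrt F := by
    calc s ^ 2 ≤ ‖u + v‖ ^ 2 := by
          exact pow_le_pow_left₀ hsnn hs_le 2
      _ ≤ s + 2 * Real.sqrt F := huv
  nlinarith [Real.sqrt_nonneg F, sq_nonneg (s - 1), mul_nonneg hsnn (Real.sqrt_nonneg F)]

/-! ### Trace lemmas -/

lemma trace_mul_conjT (M : Matrix n n ℂ) :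
    trace (M * Mᴴ) = ((∑ i, ∑ j, ‖M i j‖ ^ 2 : ℝ) : ℂ) := by
  have h : ∀ i j, M i j * star (M i j) = ((‖M i j‖ ^ 2 : ℝ) : ℂ) := by
    intro i j
    rw [Complex.star_def, Complex.mul_conj, Complex.normSq_eq_norm_sq]
  simp only [Matrix.trace, Matrix.diag_apply, Matrix.mul_apply, Matrix.conjTranspose_apply, h]
  push_cast
  rfl

lemma trace_proj_eq_frob (Q0 Q1 : Matrix n n ℂ)
    (h0 : Q0 * Q0 = Q0) (h0h : Q0.IsHermitian) (h1 : Q1 * Q1 = Q1) (h1h : Q1.IsHermitian) :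
    trace (Q0 * Q1) = ((∑ i, ∑ j, ‖(Q0 * Q1) i j‖ ^ 2 : ℝ) : ℂ) := by
  rw [← trace_mul_conjT]
  have hct : (Q0 * Q1)ᴴ = Q1 * Q0 := by
    rw [Matrix.conjTranspose_mul, h1h.eq, h0h.eq]
  rw [hct]
  have hm : Q0 * Q1 * (Q1 * Q0) = Q0 * Q1 * Q0 := by
    calc Q0 * Q1 * (Q1 * Q0) = Q0 * ((Q1 * Q1) * Q0) := by simp only [Matrix.mul_assoc]
      _ = Q0 * (Q1 * Q0) := by rw [h1]
      _ = Q0 * Q1 * Q0 := by rw [Matrix.mul_assoc]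
  rw [hm, Matrix.trace_mul_cycle, h0]

lemma trace_eq_sum_eig (A : Matrix n n ℂ) (hh : A.IsHermitian) :
    trace A = ((∑ i, hh.eigenvalues i : ℝ) : ℂ) := by
  conv_lhs => rw [hh.spectral_theorem, Unitary.conjStarAlgAut_apply]
  rw [Matrix.trace_mul_cycle]
  have hU : (star (hh.eigenvectorUnitary : Matrix n n ℂ)) * (hh.eigenvectorUnitary : Matrix n n ℂ) = 1 := by
    exact_mod_cast Unitary.coe_star_mul_self hh.eigenvectorUnitary
  rw [hU, one_mul, Matrix.trace_diagonal]
  push_cast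
  rfl

lemma eig_zero_or_one (A : Matrix n n ℂ) (hA : A * A = A) (hh : A.IsHermitian) (i : n) :
    hh.eigenvalues i = 0 ∨ hh.eigenvalues i = 1 := by
  set μ := hh.eigenvalues i with hμ
  have hv := hh.mulVec_eigenvectorBasis i
  have h2 : A *ᵥ (A *ᵥ ⇑(hh.eigenvectorBasis i)) = (μ * μ) • ⇑(hh.eigenvectorBasis i) := by
    rw [hv, Matrix.mulVec_smul, hv, smul_smul]
  rw [Matrix.mulVec_mulVec, hA, hv] at h2
  have hne : ⇑(hh.eigenvectorBasis i) ≠ 0 := by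
    have := hh.eigenvectorBasis.orthonormal.ne_zero i
    intro hc
    apply this
    ext j
    exact congrFun hc j
  have hz : (μ - μ * μ) • ⇑(hh.eigenvectorBasis i) = (0 : n → ℂ) := by
    rw [sub_smul, h2, sub_self]
  rcases smul_eq_zero.mp hz with h | h
  · have : μ * (1 - μ) = 0 := by linear_combination h
    rcases mul_eq_zero.mp this with h' | h'
    · exact Or.inl h'
    · right; linarith
  · exact absurd h hne

lemma trace_re_le_rank (A : Matrix n n ℂ) (hA : A * A = A) (hh : A.IsHermitian) :
    0 ≤ (trace A).re ∧ (trace A).re ≤ (A.rank : ℝ) := by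
  have ht : (trace A).re = ∑ i, hh.eigenvalues i := by
    rw [trace_eq_sum_eig A hh, Complex.ofReal_re]
  constructor
  · rw [ht]
    refine Finset.sum_nonneg fun i _ => ?_
    rcases eig_zero_or_one A hA hh i with h | h <;> rw [h] <;> norm_num
  · rw [ht, hh.rank_eq_card_non_zero_eigs]
    rw [Fintype.card_subtype]
    calc (∑ i, hh.eigenvalues i)
        ≤ ∑ i, (if hh.eigenvalues i ≠ 0 then (1:ℝ) else 0) := by
          refine Finset.sum_le_sum fun i _ => ?_
          rcases eig_zero_or_one A hA hh i with h | h <;> rw [h] <;> simp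
      _ = ((Finset.univ.filter fun i => hh.eigenvalues i ≠ 0).card : ℝ) := by
          rw [Finset.sum_ite, Finset.sum_const, Finset.sum_const]
          simp
      _ ≤ _ := le_refl _

end Generic

/-- For a projector `Π₀` of rank at most `2^λ`, `Π₁ = P Π₀ P†`, and
`p = ‖Π₀ + Π₁‖` the operator norm (= the max of the quadratic form over unit
vectors), the probability over a uniformly random `m`-qubit Pauli `P` that
`p ≥ 1 + 3·2^{−(m−4λ)/3}` is at most `2^{−(m−4λ)/3}`. -/
theorem pauli_projector_opnorm_tail (m lam : ℕ)
    (Q0 : Matrix (Fin m → ZMod 2) (Fin m → ZMod 2) ℂ)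
    (hproj : Q0 * Q0 = Q0) (hherm : Q0.IsHermitian) (hrank : Q0.rank ≤ 2 ^ lam) :
    ((Finset.filter (fun p : (Fin m → ZMod 2) × (Fin m → ZMod 2) =>
        ∃ ψ : (Fin m → ZMod 2) → ℂ, (∑ i, ‖ψ i‖ ^ 2 = 1) ∧
          1 + 3 * (2 : ℝ) ^ (-((m : ℝ) - 4 * lam) / 3)
            ≤ (∑ i, star (ψ i) *
                (Q0 + pauli m p.1 p.2 * Q0 * (pauli m p.1 p.2)ᴴ).mulVec ψ i).re)
      Finset.univ).card : ℝ) / 4 ^ m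
    ≤ (2 : ℝ) ^ (-((m : ℝ) - 4 * lam) / 3) := by
  classical
  set ε : ℝ := (2 : ℝ) ^ (-((m : ℝ) - 4 * lam) / 3) with hε
  have hε0 : 0 < ε := Real.rpow_pos_of_pos (by norm_num) _
  set S := (Finset.filter (fun p : (Fin m → ZMod 2) × (Fin m → ZMod 2) =>
        ∃ ψ : (Fin m → ZMod 2) → ℂ, (∑ i, ‖ψ i‖ ^ 2 = 1) ∧
          1 + 3 * ε
            ≤ (∑ i, star (ψ i) *
                (Q0 + pauli m p.1 p.2 * Q0 * (pauli m p.1 p.2)ᴴ).mulVec ψ i).re)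
      Finset.univ) with hS
  -- projector properties of the conjugated matrix
  have hQ1proj : ∀ p : (Fin m → ZMod 2) × (Fin m → ZMod 2),
      (pauli m p.1 p.2 * Q0 * (pauli m p.1 p.2)ᴴ) * (pauli m p.1 p.2 * Q0 * (pauli m p.1 p.2)ᴴ)
        = pauli m p.1 p.2 * Q0 * (pauli m p.1 p.2)ᴴ := by
    intro p
    simp only [Matrix.mul_assoc]
    rw [← Matrix.mul_assoc (pauli m p.1 p.2)ᴴ (pauli m p.1 p.2), pauli_conjT_mul, one_mul,
      ← Matrix.mul_assoc Q0 Q0, hproj]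
  have hQ1herm : ∀ p : (Fin m → ZMod 2) × (Fin m → ZMod 2), (pauli m p.1 p.2 * Q0 * (pauli m p.1 p.2)ᴴ).IsHermitian := by
    intro p
    unfold Matrix.IsHermitian
    rw [Matrix.conjTranspose_mul, Matrix.conjTranspose_mul, Matrix.conjTranspose_conjTranspose,
      hherm.eq, Matrix.mul_assoc]
  -- the Frobenius weight
  set Fr : (Fin m → ZMod 2) × (Fin m → ZMod 2) → ℝ := fun p => ∑ i, ∑ j, ‖(Q0 * (pauli m p.1 p.2 * Q0 * (pauli m p.1 p.2)ᴴ)) i j‖ ^ 2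
    with hFr
  have hFrnn : ∀ p, 0 ≤ Fr p := fun p =>
    Finset.sum_nonneg fun i _ => Finset.sum_nonneg fun j _ => sq_nonneg _
  have hFr_eq : ∀ p : (Fin m → ZMod 2) × (Fin m → ZMod 2),
      trace (Q0 * (pauli m p.1 p.2 * Q0 * (pauli m p.1 p.2)ᴴ)) = ((Fr p : ℝ) : ℂ) := fun p =>
    trace_proj_eq_frob Q0 _ hproj hherm (hQ1proj p) (hQ1herm p)
  -- membership implies large Frobenius norm
  have hmem : ∀ p ∈ S, ε ^ 2 ≤ Fr p := by
    intro p hp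
    rw [hS, Finset.mem_filter] at hp
    obtain ⟨-, ψ, hψ1, hψ2⟩ := hp
    have hq := quad_bound Q0 (pauli m p.1 p.2 * Q0 * (pauli m p.1 p.2)ᴴ)
      hproj hherm (hQ1proj p) (hQ1herm p) ψ hψ1
    have hsq : ε ≤ Real.sqrt (Fr p) := by
      rw [hFr]
      dsimp only
      linarith [hψ2, hq]
    calc ε ^ 2 ≤ (Real.sqrt (Fr p)) ^ 2 := pow_le_pow_left₀ hε0.le hsq 2
      _ = Fr p := Real.sq_sqrt (hFrnn p)
  -- eigenvalue bound on the trace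
  have ht := trace_re_le_rank Q0 hproj hherm
  have htle : (trace Q0).re ≤ (2:ℝ) ^ lam := by
    refine le_trans ht.2 ?_
    have : (Q0.rank : ℝ) ≤ ((2 ^ lam : ℕ) : ℝ) := by exact_mod_cast hrank
    simpa using this
  -- Markov-style counting
  have hcount : (S.card : ℝ) * ε ^ 2 ≤ 2 ^ m * ((2:ℝ) ^ lam) ^ 2 := by
    calc (S.card : ℝ) * ε ^ 2 = ∑ _p ∈ S, ε ^ 2 := by
          rw [Finset.sum_const, nsmul_eq_mul]
      _ ≤ ∑ p ∈ S, Fr p := Finset.sum_le_sum hmem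
      _ ≤ ∑ p : (Fin m → ZMod 2) × (Fin m → ZMod 2), Fr p :=
          Finset.sum_le_sum_of_subset_of_nonneg (Finset.subset_univ S)
            (fun p _ _ => hFrnn p)
      _ = (∑ p : (Fin m → ZMod 2) × (Fin m → ZMod 2), trace (Q0 * (pauli m p.1 p.2 * Q0 * (pauli m p.1 p.2)ᴴ))).re := by
          rw [Complex.re_sum]
          exact Finset.sum_congr rfl fun p _ => by rw [hFr_eq p, Complex.ofReal_re]
      _ = ((2:ℂ)^m * (trace Q0)^2).re := by rw [sum_pauli_trace]
      _ = 2 ^ m * ((trace Q0).re) ^ 2 := by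
          have htr : trace Q0 = (((trace Q0).re : ℝ) : ℂ) := by
            rw [trace_eq_sum_eig Q0 hherm]; simp
          have hc : ((2:ℂ)^m * ((((trace Q0).re : ℝ)) : ℂ)^2)
              = (((2^m * ((trace Q0).re)^2 : ℝ)) : ℂ) := by
            push_cast; ring
          rw [htr, hc, Complex.ofReal_re]
          simp
      _ ≤ 2 ^ m * ((2:ℝ) ^ lam) ^ 2 := by
          have h2 : ((trace Q0).re) ^ 2 ≤ ((2:ℝ) ^ lam) ^ 2 := pow_le_pow_left₀ ht.1 htle 2
          have : (0:ℝ) ≤ 2 ^ m := by positivity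
          nlinarith
  -- power arithmetic
  have hε3 : ε ^ 3 = (2:ℝ) ^ (4 * (lam:ℝ) - m) := by
    rw [hε, ← Real.rpow_natCast ((2:ℝ) ^ (-((m : ℝ) - 4 * lam) / 3)) 3,
      ← Real.rpow_mul (by norm_num : (0:ℝ) ≤ 2)]
    congr 1
    push_cast
    ring
  have h4m : ((4:ℝ)) ^ m = (2:ℝ) ^ ((2 * m : ℕ)) := by
    rw [show (4:ℝ) = 2 ^ 2 by norm_num, ← pow_mul]
  have hkey : (2:ℝ) ^ m * ((2:ℝ) ^ lam) ^ 2 ≤ ε * 4 ^ m * ε ^ 2 := by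
    have hlhs : (2:ℝ) ^ m * ((2:ℝ) ^ lam) ^ 2 = (2:ℝ) ^ ((m : ℝ) + 2 * lam) := by
      rw [← pow_mul, ← pow_add, ← Real.rpow_natCast (2:ℝ) (m + lam * 2)]
      congr 1
      push_cast
      ring
    have hrhs : ε * 4 ^ m * ε ^ 2 = (2:ℝ) ^ ((4 * (lam:ℝ) - m) + 2 * m) := by
      have : ε * 4 ^ m * ε ^ 2 = ε ^ 3 * 4 ^ m := by ring
      rw [this, hε3, h4m, ← Real.rpow_natCast (2:ℝ) (2 * m),
        ← Real.rpow_add (by norm_num : (0:ℝ) < 2)]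
      congr 1
      push_cast
      ring
    rw [hlhs, hrhs]
    apply Real.rpow_le_rpow_of_exponent_le (by norm_num)
    push_cast
    linarith [Nat.cast_nonneg (α := ℝ) lam]
  rw [div_le_iff₀ (by positivity : (0:ℝ) < 4 ^ m)]
  have hfin : (S.card : ℝ) * ε ^ 2 ≤ (ε * 4 ^ m) * ε ^ 2 := le_trans hcount hkey
  exact le_of_mul_le_mul_right hfin (by positivity)
end
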